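/- Let k ≥ 1 and let Υ ⊆ F_{2,k}. Then the following identity of formal power series in t over ℚ holds: (Σ_{n≥1} Alt_{2n−1}^Υ t^{2n−1}/(k(2n−1))!) · (1 + Σ_{n≥1} (−1)^n t^{2n} full_{2n}^Υ/(2kn)!) = Σ_{n≥1} (−1)^{n−1} t^{2n−1} full_{2n−1}^Υ/(k(2n−1))!. -/

import Mathlib

/-- `F` is a filling of the `k × n` rectangle (row `i`, `1 ≤ i ≤ k`, counted from the
bottom; column `j`, `1 ≤ j ≤ n`) with the integers `1, …, kn`, each used exactly once,
whose entries strictly increase up each column.  Cells outside the rectangle carry `0`. -/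
def IsFilling (n k : ℕ) (F : ℕ → ℕ → ℕ) : Prop :=
  (∀ i j, F i j ≠ 0 → 1 ≤ i ∧ i ≤ k ∧ 1 ≤ j ∧ j ≤ n) ∧
  Set.BijOn (fun p : ℕ × ℕ => F p.1 p.2) (Set.Icc 1 k ×ˢ Set.Icc 1 n) (Set.Icc 1 (k * n)) ∧
  ∀ i j, 1 ≤ i → i < k → 1 ≤ j → j ≤ n → F i j < F (i + 1) j

/-- The entries of `F` in columns `i, …, i + j - 1` are in the same relative order as the
`k × j` pattern `P`; i.e. `F` has a `P`-match starting at position `i`. -/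
def MatchAt (j k : ℕ) (P F : ℕ → ℕ → ℕ) (i : ℕ) : Prop :=
  ∀ a b c d, 1 ≤ a → a ≤ k → 1 ≤ b → b ≤ j → 1 ≤ c → c ≤ k → 1 ≤ d → d ≤ j →
    (F a (i - 1 + b) < F c (i - 1 + d) ↔ P a b < P c d)

/-- `full_n^Υ`: the number of fillings `F ∈ F_{n,k}` having `Υ`-matches starting at
every position `1, …, n-1` (for two-column patterns `Υ ⊆ F_{2,k}`). -/
noncomputable def fullCount (n k : ℕ) (U : Set (ℕ → ℕ → ℕ)) : ℕ :=
  Nat.card {F : ℕ → ℕ → ℕ // IsFilling n k F ∧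
    ∀ i, 1 ≤ i → i ≤ n - 1 → ∃ P ∈ U, MatchAt 2 k P F i}

/-- `Alt_n^Υ`: the number of `Υ`-alternating fillings `F ∈ F_{n,k}`, i.e. those with
`Υ`-matches starting at every odd position `i ≤ n-1` and at no even position
`1 ≤ i ≤ n-1`. -/
noncomputable def altCount (n k : ℕ) (U : Set (ℕ → ℕ → ℕ)) : ℕ :=
  Nat.card {F : ℕ → ℕ → ℕ // IsFilling n k F ∧
    (∀ i, Odd i → i ≤ n - 1 → ∃ P ∈ U, MatchAt 2 k P F i) ∧
    (∀ i, Even i → 1 ≤ i → i ≤ n - 1 → ¬ ∃ P ∈ U, MatchAt 2 k P F i)}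

namespace Stmt11


noncomputable def nth (s : Finset ℕ) (r : ℕ) : ℕ :=
  if h : r - 1 < s.card then ((s.orderIsoOfFin rfl) ⟨r - 1, h⟩ : ℕ) else 0

noncomputable def rk (s : Finset ℕ) (x : ℕ) : ℕ :=
  if h : x ∈ s then (((s.orderIsoOfFin rfl).symm ⟨x, h⟩ : Fin s.card) : ℕ) + 1 else 0

lemma rk_mem {s : Finset ℕ} {x : ℕ} (hx : x ∈ s) : 1 ≤ rk s x ∧ rk s x ≤ s.card := by
  rw [rk, dif_pos hx]
  exact ⟨Nat.succ_le_succ (Nat.zero_le _), ((s.orderIsoOfFin rfl).symm ⟨x, hx⟩).isLt⟩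

lemma nth_mem {s : Finset ℕ} {r : ℕ} (h1 : 1 ≤ r) (h2 : r ≤ s.card) : nth s r ∈ s := by
  have h : r - 1 < s.card := by omega
  rw [nth, dif_pos h]
  exact ((s.orderIsoOfFin rfl) ⟨r - 1, h⟩).2

lemma nth_rk {s : Finset ℕ} {x : ℕ} (hx : x ∈ s) : nth s (rk s x) = x := by
  rw [rk, dif_pos hx]
  set v : Fin s.card := (s.orderIsoOfFin rfl).symm ⟨x, hx⟩ with hv
  have h : (v : ℕ) + 1 - 1 < s.card := by
    have := v.isLt; omega
  rw [nth, dif_pos h]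
  have h2 : (⟨(v : ℕ) + 1 - 1, h⟩ : Fin s.card) = v := Fin.ext (by simp)
  rw [h2, hv, (s.orderIsoOfFin rfl).apply_symm_apply]

lemma rk_nth {s : Finset ℕ} {r : ℕ} (h1 : 1 ≤ r) (h2 : r ≤ s.card) : rk s (nth s r) = r := by
  have h : r - 1 < s.card := by omega
  have hm : nth s r ∈ s := nth_mem h1 h2
  rw [rk, dif_pos hm]
  have hn : nth s r = ((s.orderIsoOfFin rfl) ⟨r - 1, h⟩ : ℕ) := by
    rw [nth, dif_pos h]
  have : (⟨nth s r, hm⟩ : {x // x ∈ s}) = (s.orderIsoOfFin rfl) ⟨r - 1, h⟩ :=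
    Subtype.ext hn
  rw [this, (s.orderIsoOfFin rfl).symm_apply_apply]
  simp only [Fin.val_mk]
  omega

lemma rk_lt_rk {s : Finset ℕ} {x y : ℕ} (hx : x ∈ s) (hy : y ∈ s) :
    rk s x < rk s y ↔ x < y := by
  rw [rk, dif_pos hx, rk, dif_pos hy, Nat.add_lt_add_iff_right]
  rw [← Fin.lt_def, (s.orderIsoOfFin rfl).symm.lt_iff_lt, Subtype.mk_lt_mk]

lemma nth_lt_nth {s : Finset ℕ} {r r' : ℕ} (h1 : 1 ≤ r) (h2 : r ≤ s.card)
    (h1' : 1 ≤ r') (h2' : r' ≤ s.card) : nth s r < nth s r' ↔ r < r' := by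
  conv_rhs => rw [← rk_nth h1 h2, ← rk_nth h1' h2']
  exact (rk_lt_rk (nth_mem h1 h2) (nth_mem h1' h2')).symm

lemma rk_bijOn {s : Finset ℕ} : Set.BijOn (rk s) ↑s (Set.Icc 1 s.card) := by
  refine ⟨fun x hx => ?_, fun x hx y hy h => ?_, fun r hr => ?_⟩
  · exact rk_mem hx
  · by_contra hne
    have hx' : x ∈ s := hx
    have hy' : y ∈ s := hy
    rcases Nat.lt_trichotomy x y with h' | h' | h'
    · exact absurd h (Nat.ne_of_lt ((rk_lt_rk hx' hy').mpr h'))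
    · exact hne h'
    · exact absurd h.symm (Nat.ne_of_lt ((rk_lt_rk hy' hx').mpr h'))
  · exact ⟨nth s r, nth_mem hr.1 hr.2, rk_nth hr.1 hr.2⟩



def HM (k : ℕ) (U : Set (ℕ → ℕ → ℕ)) (F : ℕ → ℕ → ℕ) (i : ℕ) : Prop :=
  ∃ P ∈ U, MatchAt 2 k P F i

lemma matchAt_transfer {k : ℕ} {P F F' : ℕ → ℕ → ℕ} {i i' : ℕ}
    (h : ∀ a t c t', 1 ≤ a → a ≤ k → 1 ≤ t → t ≤ 2 → 1 ≤ c → c ≤ k → 1 ≤ t' → t' ≤ 2 →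
      (F a (i - 1 + t) < F c (i - 1 + t') ↔ F' a (i' - 1 + t) < F' c (i' - 1 + t'))) :
    MatchAt 2 k P F i ↔ MatchAt 2 k P F' i' := by
  constructor <;> intro H a b c d ha1 ha2 hb1 hb2 hc1 hc2 hd1 hd2
  · rw [← h a b c d ha1 ha2 hb1 hb2 hc1 hc2 hd1 hd2]
    exact H a b c d ha1 ha2 hb1 hb2 hc1 hc2 hd1 hd2
  · rw [h a b c d ha1 ha2 hb1 hb2 hc1 hc2 hd1 hd2]
    exact H a b c d ha1 ha2 hb1 hb2 hc1 hc2 hd1 hd2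

lemma hm_transfer {k : ℕ} {U : Set (ℕ → ℕ → ℕ)} {F F' : ℕ → ℕ → ℕ} {i i' : ℕ}
    (h : ∀ a t c t', 1 ≤ a → a ≤ k → 1 ≤ t → t ≤ 2 → 1 ≤ c → c ≤ k → 1 ≤ t' → t' ≤ 2 →
      (F a (i - 1 + t) < F c (i - 1 + t') ↔ F' a (i' - 1 + t) < F' c (i' - 1 + t'))) :
    HM k U F i ↔ HM k U F' i' := by
  unfold HM
  exact exists_congr fun P => and_congr_right fun _ => matchAt_transfer h

lemma finite_fillings (n k : ℕ) (p : (ℕ → ℕ → ℕ) → Prop) :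
    {F : ℕ → ℕ → ℕ | IsFilling n k F ∧ p F}.Finite := by
  have : {F : ℕ → ℕ → ℕ | IsFilling n k F ∧ p F} ⊆ {F | IsFilling n k F} :=
    fun F hF => hF.1
  refine Set.Finite.subset ?_ this
  have hinj : Set.InjOn
      (fun (F : ℕ → ℕ → ℕ) (q : Fin (k+1) × Fin (n+1)) => F q.1 q.2)
      {F | IsFilling n k F} := by
    intro F hF F' hF' heq
    funext i j
    by_cases hij : 1 ≤ i ∧ i ≤ k ∧ 1 ≤ j ∧ j ≤ n
    · have hi : i < k + 1 := by omega
      have hj : j < n + 1 := by omega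
      have := congrFun heq (⟨i, hi⟩, ⟨j, hj⟩)
      exact this
    · have h1 : F i j = 0 := by
        by_contra h0; exact hij (hF.1 i j h0)
      have h2 : F' i j = 0 := by
        by_contra h0; exact hij (hF'.1 i j h0)
      rw [h1, h2]
  refine Set.Finite.of_finite_image ?_ hinj
  have hsub : (fun (F : ℕ → ℕ → ℕ) (q : Fin (k+1) × Fin (n+1)) => F q.1 q.2) ''
      {F | IsFilling n k F} ⊆
      Set.pi Set.univ (fun _ : Fin (k+1) × Fin (n+1) => Set.Icc 0 (k * n)) := by
    rintro f ⟨F, hF, rfl⟩ q _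
    by_cases h0 : F q.1 q.2 = 0
    · simp [h0]
    · obtain ⟨h1, h2, h3, h4⟩ := hF.1 q.1 q.2 h0
      have : F q.1 q.2 ∈ Set.Icc 1 (k * n) :=
        hF.2.1.mapsTo (show ((q.1 : ℕ), (q.2 : ℕ)) ∈
          (Set.Icc 1 k ×ˢ Set.Icc 1 n) from ⟨⟨h1, h2⟩, ⟨h3, h4⟩⟩)
      exact ⟨Nat.zero_le _, this.2⟩
  exact Set.Finite.subset (Set.Finite.pi fun _ => Set.finite_Icc 0 (k * n)) hsub

lemma card_split {α : Type*} (p q : α → Prop) (h : {x | p x}.Finite) :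
    Nat.card {x // p x} = Nat.card {x // p x ∧ q x} + Nat.card {x // p x ∧ ¬ q x} := by
  classical
  have e1 : Nat.card {x // p x} = {x | p x}.ncard := rfl
  have e2 : Nat.card {x // p x ∧ q x} = {x | p x ∧ q x}.ncard := rfl
  have e3 : Nat.card {x // p x ∧ ¬ q x} = {x | p x ∧ ¬ q x}.ncard := rfl
  rw [e1, e2, e3]
  have hset : {x | p x} = {x | p x ∧ q x} ∪ {x | p x ∧ ¬ q x} := by
    ext x; by_cases hq : q x <;> simp [hq]
  rw [hset]
  refine Set.ncard_union_eq ?_ ?_ ?_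
  · rw [Set.disjoint_left]; rintro x ⟨_, hq⟩ ⟨_, hnq⟩; exact hnq hq
  · exact h.subset (by intro x hx; exact hx.1)
  · exact h.subset (by intro x hx; exact hx.1)



section Shuffle

variable (k m b : ℕ) (U : Set (ℕ → ℕ → ℕ))

/-- values of `F` in the first `b` columns -/
noncomputable def fcols (F : ℕ → ℕ → ℕ) : Finset ℕ :=
  ((Finset.Icc 1 k) ×ˢ (Finset.Icc 1 b)).image fun p => F p.1 p.2

noncomputable def stdL (F : ℕ → ℕ → ℕ) : ℕ → ℕ → ℕ := fun i j =>
  if 1 ≤ i ∧ i ≤ k ∧ 1 ≤ j ∧ j ≤ b then rk (fcols k b F) (F i j) else 0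

noncomputable def stdR (F : ℕ → ℕ → ℕ) : ℕ → ℕ → ℕ := fun i j =>
  if 1 ≤ i ∧ i ≤ k ∧ 1 ≤ j ∧ j ≤ m - b then
    rk (Finset.Icc 1 (k * m) \ fcols k b F) (F i (b + j)) else 0

noncomputable def shuf (s : Finset ℕ) (G H : ℕ → ℕ → ℕ) : ℕ → ℕ → ℕ := fun i j =>
  if 1 ≤ i ∧ i ≤ k then
    if 1 ≤ j ∧ j ≤ b then nth s (G i j)
    else if b + 1 ≤ j ∧ j ≤ m then nth (Finset.Icc 1 (k * m) \ s) (H i (j - b)) else 0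
  else 0

def FullC (F : ℕ → ℕ → ℕ) (n : ℕ) : Prop := ∀ i, 1 ≤ i → i ≤ n - 1 → HM k U F i

def AltC (F : ℕ → ℕ → ℕ) (n : ℕ) : Prop :=
  ∀ i, 1 ≤ i → i ≤ n - 1 → (HM k U F i ↔ Odd i)

def Tcond (F : ℕ → ℕ → ℕ) : Prop :=
  ∀ i, 1 ≤ i → i ≤ m - 1 → (i < b → HM k U F i) ∧ (b < i → (HM k U F i ↔ Odd i))

def Ucond (F : ℕ → ℕ → ℕ) : Prop :=
  ∀ i, 1 ≤ i → i ≤ m - 1 → (i ≤ b → HM k U F i) ∧ (b < i → (HM k U F i ↔ Odd i))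

variable {k m b}

section Fwd

variable {F : ℕ → ℕ → ℕ} (hF : IsFilling m k F) (hbm : b ≤ m)

include hF

lemma mem_fcols {i j : ℕ} (hi1 : 1 ≤ i) (hi2 : i ≤ k) (hj1 : 1 ≤ j) (hj2 : j ≤ b) :
    F i j ∈ fcols k b F := by
  rw [fcols, Finset.mem_image]
  refine ⟨(i, j), ?_, rfl⟩
  rw [Finset.mem_product, Finset.mem_Icc, Finset.mem_Icc]
  exact ⟨⟨hi1, hi2⟩, hj1, hj2⟩

include hbm

lemma fcols_subset : fcols k b F ⊆ Finset.Icc 1 (k * m) := by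
  intro v hv
  rw [fcols, Finset.mem_image] at hv
  obtain ⟨p, hp, rfl⟩ := hv
  rw [Finset.mem_product, Finset.mem_Icc, Finset.mem_Icc] at hp
  have : F p.1 p.2 ∈ Set.Icc 1 (k * m) :=
    hF.2.1.mapsTo (Set.mem_prod.mpr ⟨⟨hp.1.1, hp.1.2⟩, ⟨hp.2.1, le_trans hp.2.2 hbm⟩⟩)
  rw [Finset.mem_Icc]
  exact this

lemma bijOn_L : Set.BijOn (fun p : ℕ × ℕ => F p.1 p.2)
    (Set.Icc 1 k ×ˢ Set.Icc 1 b) ↑(fcols k b F) := by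
  have hinj : Set.InjOn (fun p : ℕ × ℕ => F p.1 p.2) (Set.Icc 1 k ×ˢ Set.Icc 1 b) := by
    apply hF.2.1.injOn.mono
    intro p hp
    exact ⟨hp.1, hp.2.1, le_trans hp.2.2 hbm⟩
  have himg : (fun p : ℕ × ℕ => F p.1 p.2) '' (Set.Icc 1 k ×ˢ Set.Icc 1 b)
      = ↑(fcols k b F) := by
    rw [fcols, Finset.coe_image, Finset.coe_product, Finset.coe_Icc, Finset.coe_Icc]
  exact himg ▸ hinj.bijOn_image

lemma fcols_card : (fcols k b F).card = k * b := by
  have h1 : (fcols k b F) = ((Finset.Icc 1 k) ×ˢ (Finset.Icc 1 b)).image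
      (fun p : ℕ × ℕ => F p.1 p.2) := rfl
  rw [h1, Finset.card_image_of_injOn, Finset.card_product, Nat.card_Icc, Nat.card_Icc]
  · simp
  · intro p hp q hq hpq
    rw [Finset.mem_coe, Finset.mem_product, Finset.mem_Icc, Finset.mem_Icc] at hp hq
    exact (bijOn_L hF hbm).injOn ⟨⟨hp.1.1, hp.1.2⟩, hp.2⟩ ⟨⟨hq.1.1, hq.1.2⟩, hq.2⟩ hpq

lemma notmem_fcols {i j : ℕ} (hi1 : 1 ≤ i) (hi2 : i ≤ k) (hj1 : b + 1 ≤ j) (hj2 : j ≤ m) :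
    F i j ∉ fcols k b F := by
  intro hv
  rw [fcols, Finset.mem_image] at hv
  obtain ⟨p, hp, hpv⟩ := hv
  rw [Finset.mem_product, Finset.mem_Icc, Finset.mem_Icc] at hp
  have := hF.2.1.injOn
    (show (p.1, p.2) ∈ _ from ⟨⟨hp.1.1, hp.1.2⟩, ⟨hp.2.1, le_trans hp.2.2 hbm⟩⟩)
    (show (i, j) ∈ (Set.Icc 1 k ×ˢ Set.Icc 1 m) from ⟨⟨hi1, hi2⟩, ⟨by omega, hj2⟩⟩)
    hpv
  have h2 := congrArg Prod.snd this
  simp only at h2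
  omega

lemma scompl_card : (Finset.Icc 1 (k * m) \ fcols k b F).card = k * (m - b) := by
  rw [Finset.card_sdiff_of_subset (fcols_subset hF hbm), Nat.card_Icc, fcols_card hF hbm]
  have h2 : k * m = k * b + k * (m - b) := by
    rw [← Nat.mul_add]
    congr 1
    omega
  omega

lemma bijOn_R : Set.BijOn (fun p : ℕ × ℕ => F p.1 (b + p.2))
    (Set.Icc 1 k ×ˢ Set.Icc 1 (m - b)) ↑(Finset.Icc 1 (k * m) \ fcols k b F) := by
  constructor
  · rintro ⟨i, j⟩ ⟨⟨hi1, hi2⟩, ⟨hj1, hj2⟩⟩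
    have hmem : F i (b + j) ∈ Set.Icc 1 (k * m) :=
      hF.2.1.mapsTo (show ((i : ℕ), b + j) ∈ (Set.Icc 1 k ×ˢ Set.Icc 1 m) from
        ⟨⟨hi1, hi2⟩, ⟨by omega, by omega⟩⟩)
    rw [Finset.mem_coe, Finset.mem_sdiff, Finset.mem_Icc]
    exact ⟨hmem, notmem_fcols hF hbm hi1 hi2 (by omega) (by omega)⟩
  constructor
  · rintro ⟨i, j⟩ ⟨⟨hi1, hi2⟩, ⟨hj1, hj2⟩⟩ ⟨i', j'⟩ ⟨⟨hi1', hi2'⟩, ⟨hj1', hj2'⟩⟩ heq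
    have := hF.2.1.injOn
      (show (i, b + j) ∈ (Set.Icc 1 k ×ˢ Set.Icc 1 m) from ⟨⟨hi1, hi2⟩, by omega, by omega⟩)
      (show (i', b + j') ∈ (Set.Icc 1 k ×ˢ Set.Icc 1 m) from ⟨⟨hi1', hi2'⟩, by omega, by omega⟩)
      heq
    have e1 := congrArg Prod.fst this
    have e2 := congrArg Prod.snd this
    simp only at e1 e2
    exact Prod.ext e1 (by omega)
  · intro v hv
    rw [Finset.mem_coe, Finset.mem_sdiff, Finset.mem_Icc] at hv
    obtain ⟨⟨i, j⟩, hp, hpv⟩ := hF.2.1.surjOn (Set.mem_Icc.mpr hv.1)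
    obtain ⟨⟨hi1, hi2⟩, hj1, hj2⟩ := hp
    have hjb : b + 1 ≤ j := by
      by_contra hc
      exact hv.2 (hpv ▸ mem_fcols hF hi1 hi2 hj1 (by omega))
    refine ⟨(i, j - b), ⟨⟨hi1, hi2⟩, by omega, by omega⟩, ?_⟩
    simp only
    rw [show b + (j - b) = j by omega]
    exact hpv

end Fwd

end Shuffle


section Fwd2

variable {k m b : ℕ} {U : Set (ℕ → ℕ → ℕ)} {F : ℕ → ℕ → ℕ}
variable (hF : IsFilling m k F) (hbm : b ≤ m)

include hF hbm

lemma stdL_eq {i j : ℕ} (hi1 : 1 ≤ i) (hi2 : i ≤ k) (hj1 : 1 ≤ j) (hj2 : j ≤ b) :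
    stdL k b F i j = rk (fcols k b F) (F i j) := by
  rw [stdL, if_pos ⟨hi1, hi2, hj1, hj2⟩]

lemma stdR_eq {i j : ℕ} (hi1 : 1 ≤ i) (hi2 : i ≤ k) (hj1 : 1 ≤ j) (hj2 : j ≤ m - b) :
    stdR k m b F i j = rk (Finset.Icc 1 (k * m) \ fcols k b F) (F i (b + j)) := by
  rw [stdR, if_pos ⟨hi1, hi2, hj1, hj2⟩]

lemma stdL_isFilling : IsFilling b k (stdL k b F) := by
  refine ⟨?_, ?_, ?_⟩
  · intro i j h0
    by_contra hc
    rw [stdL, if_neg (by tauto)] at h0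
    exact h0 rfl
  · have hbij := rk_bijOn.comp (bijOn_L hF hbm)
    rw [fcols_card hF hbm] at hbij
    refine hbij.congr ?_
    rintro ⟨i, j⟩ ⟨⟨hi1, hi2⟩, ⟨hj1, hj2⟩⟩
    exact (stdL_eq hF hbm hi1 hi2 hj1 hj2).symm
  · intro i j hi1 hik hj1 hjb
    rw [stdL_eq hF hbm hi1 (by omega) hj1 hjb, stdL_eq hF hbm (by omega) hik hj1 hjb]
    rw [rk_lt_rk (mem_fcols hF hi1 (by omega) hj1 hjb) (mem_fcols hF (by omega) hik hj1 hjb)]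
    exact hF.2.2 i j hi1 hik hj1 (by omega)

lemma stdR_isFilling : IsFilling (m - b) k (stdR k m b F) := by
  refine ⟨?_, ?_, ?_⟩
  · intro i j h0
    by_contra hc
    rw [stdR, if_neg (by tauto)] at h0
    exact h0 rfl
  · have hbij := rk_bijOn.comp (bijOn_R hF hbm)
    rw [scompl_card hF hbm] at hbij
    refine hbij.congr ?_
    rintro ⟨i, j⟩ ⟨⟨hi1, hi2⟩, ⟨hj1, hj2⟩⟩
    exact (stdR_eq hF hbm hi1 hi2 hj1 hj2).symm
  · intro i j hi1 hik hj1 hjb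
    have m1 : F i (b + j) ∈ Finset.Icc 1 (k * m) \ fcols k b F :=
      (bijOn_R hF hbm).mapsTo (show ((i : ℕ), j) ∈ _ from ⟨⟨hi1, by omega⟩, ⟨hj1, hjb⟩⟩)
    have m2 : F (i + 1) (b + j) ∈ Finset.Icc 1 (k * m) \ fcols k b F :=
      (bijOn_R hF hbm).mapsTo (show ((i + 1 : ℕ), j) ∈ _ from ⟨⟨by omega, hik⟩, ⟨hj1, hjb⟩⟩)
    rw [stdR_eq hF hbm hi1 (by omega) hj1 hjb, stdR_eq hF hbm (by omega) hik hj1 hjb]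
    rw [rk_lt_rk m1 m2]
    exact hF.2.2 i (b + j) hi1 hik (by omega) (by omega)

lemma stdL_matches {i : ℕ} (hi1 : 1 ≤ i) (hi2 : i + 1 ≤ b) :
    HM k U (stdL k b F) i ↔ HM k U F i := by
  apply hm_transfer
  intro a t c t' ha1 ha2 ht1 ht2 hc1 hc2 ht1' ht2'
  rw [stdL_eq hF hbm ha1 ha2 (by omega) (by omega),
      stdL_eq hF hbm hc1 hc2 (by omega) (by omega)]
  exact rk_lt_rk (mem_fcols hF ha1 ha2 (by omega) (by omega))
    (mem_fcols hF hc1 hc2 (by omega) (by omega))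

lemma stdR_matches {i : ℕ} (hi1 : 1 ≤ i) (hi2 : i + 1 ≤ m - b) :
    HM k U (stdR k m b F) i ↔ HM k U F (b + i) := by
  apply hm_transfer
  intro a t c t' ha1 ha2 ht1 ht2 hc1 hc2 ht1' ht2'
  rw [stdR_eq hF hbm ha1 ha2 (by omega) (by omega),
      stdR_eq hF hbm hc1 hc2 (by omega) (by omega)]
  have m1 : F a (b + (i - 1 + t)) ∈ Finset.Icc 1 (k * m) \ fcols k b F :=
    (bijOn_R hF hbm).mapsTo (show ((a : ℕ), i - 1 + t) ∈ _ from
      ⟨⟨ha1, ha2⟩, ⟨by omega, by omega⟩⟩)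
  have m2 : F c (b + (i - 1 + t')) ∈ Finset.Icc 1 (k * m) \ fcols k b F :=
    (bijOn_R hF hbm).mapsTo (show ((c : ℕ), i - 1 + t') ∈ _ from
      ⟨⟨hc1, hc2⟩, ⟨by omega, by omega⟩⟩)
  rw [rk_lt_rk m1 m2]
  rw [show b + (i - 1 + t) = b + i - 1 + t by omega,
      show b + (i - 1 + t') = b + i - 1 + t' by omega]

lemma stdL_FullC (hT : Tcond k m b U F) : FullC k U (stdL k b F) b := by
  intro i h1 h2
  rw [stdL_matches hF hbm h1 (by omega)]
  exact (hT i h1 (by omega)).1 (by omega)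

lemma stdR_AltC (hT : Tcond k m b U F) (hbe : b % 2 = 0) :
    AltC k U (stdR k m b F) (m - b) := by
  intro i h1 h2
  rw [stdR_matches hF hbm h1 (by omega)]
  rw [(hT (b + i) (by omega) (by omega)).2 (by omega)]
  rw [Nat.odd_iff, Nat.odd_iff]
  omega

end Fwd2

section Bwd

variable {k m b : ℕ} {U : Set (ℕ → ℕ → ℕ)} {s : Finset ℕ} {G H : ℕ → ℕ → ℕ}

lemma shuf_eqL {i j : ℕ} (hi1 : 1 ≤ i) (hi2 : i ≤ k) (hj1 : 1 ≤ j) (hj2 : j ≤ b) :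
    shuf k m b s G H i j = nth s (G i j) := by
  rw [shuf, if_pos ⟨hi1, hi2⟩, if_pos ⟨hj1, hj2⟩]

lemma shuf_eqR {i j : ℕ} (hi1 : 1 ≤ i) (hi2 : i ≤ k) (hj1 : b + 1 ≤ j) (hj2 : j ≤ m) :
    shuf k m b s G H i j = nth (Finset.Icc 1 (k * m) \ s) (H i (j - b)) := by
  rw [shuf, if_pos ⟨hi1, hi2⟩, if_neg (by omega), if_pos ⟨hj1, hj2⟩]

lemma shuf_zero {i j : ℕ} (hbm : b ≤ m) (h : ¬(1 ≤ i ∧ i ≤ k ∧ 1 ≤ j ∧ j ≤ m)) :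
    shuf k m b s G H i j = 0 := by
  rw [shuf]
  by_cases h1 : 1 ≤ i ∧ i ≤ k
  · rw [if_pos h1, if_neg (by omega), if_neg (by omega)]
  · rw [if_neg h1]

lemma scompl_card' (hs : s ⊆ Finset.Icc 1 (k * m)) (hcard : s.card = k * b) (hbm : b ≤ m) :
    (Finset.Icc 1 (k * m) \ s).card = k * (m - b) := by
  rw [Finset.card_sdiff_of_subset hs, Nat.card_Icc, hcard]
  have h2 : k * m = k * b + k * (m - b) := by
    rw [← Nat.mul_add]
    congr 1
    omega
  omega

lemma G_range (hcard : s.card = k * b) (hG : IsFilling b k G)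
    {i j : ℕ} (hi1 : 1 ≤ i) (hi2 : i ≤ k) (hj1 : 1 ≤ j) (hj2 : j ≤ b) :
    1 ≤ G i j ∧ G i j ≤ s.card := by
  have := hG.2.1.mapsTo (show ((i : ℕ), j) ∈ Set.Icc 1 k ×ˢ Set.Icc 1 b from
    ⟨⟨hi1, hi2⟩, ⟨hj1, hj2⟩⟩)
  rw [hcard]
  exact this

lemma shuf_memL (hcard : s.card = k * b) (hG : IsFilling b k G)
    {i j : ℕ} (hi1 : 1 ≤ i) (hi2 : i ≤ k) (hj1 : 1 ≤ j) (hj2 : j ≤ b) :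
    shuf k m b s G H i j ∈ s := by
  rw [shuf_eqL hi1 hi2 hj1 hj2]
  obtain ⟨h1, h2⟩ := G_range hcard hG hi1 hi2 hj1 hj2
  exact nth_mem h1 h2

lemma H_range (hs : s ⊆ Finset.Icc 1 (k * m)) (hcard : s.card = k * b) (hbm : b ≤ m)
    (hH : IsFilling (m - b) k H)
    {i j : ℕ} (hi1 : 1 ≤ i) (hi2 : i ≤ k) (hj1 : 1 ≤ j) (hj2 : j ≤ m - b) :
    1 ≤ H i j ∧ H i j ≤ (Finset.Icc 1 (k * m) \ s).card := by
  have := hH.2.1.mapsTo (show ((i : ℕ), j) ∈ Set.Icc 1 k ×ˢ Set.Icc 1 (m - b) from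
    ⟨⟨hi1, hi2⟩, ⟨hj1, hj2⟩⟩)
  rw [scompl_card' hs hcard hbm]
  exact this

lemma shuf_memR (hs : s ⊆ Finset.Icc 1 (k * m)) (hcard : s.card = k * b) (hbm : b ≤ m)
    (hH : IsFilling (m - b) k H)
    {i j : ℕ} (hi1 : 1 ≤ i) (hi2 : i ≤ k) (hj1 : b + 1 ≤ j) (hj2 : j ≤ m) :
    shuf k m b s G H i j ∈ Finset.Icc 1 (k * m) \ s := by
  rw [shuf_eqR hi1 hi2 hj1 hj2]
  obtain ⟨h1, h2⟩ := H_range hs hcard hbm hH hi1 hi2 (by omega : 1 ≤ j - b) (by omega)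
  exact nth_mem h1 h2

lemma shuf_isFilling (hs : s ⊆ Finset.Icc 1 (k * m)) (hcard : s.card = k * b) (hbm : b ≤ m)
    (hG : IsFilling b k G) (hH : IsFilling (m - b) k H) :
    IsFilling m k (shuf k m b s G H) := by
  refine ⟨?_, ⟨?_, ?_, ?_⟩, ?_⟩
  · intro i j h0
    by_contra hc
    exact h0 (shuf_zero hbm (by tauto))
  · rintro ⟨i, j⟩ ⟨⟨hi1, hi2⟩, ⟨hj1, hj2⟩⟩
    by_cases hj : j ≤ b
    · have := hs (shuf_memL (m := m) (H := H) hcard hG hi1 hi2 hj1 hj)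
      rw [Finset.mem_Icc] at this
      exact this
    · have := shuf_memR (G := G) hs hcard hbm hH hi1 hi2 (by omega) hj2
      rw [Finset.mem_sdiff, Finset.mem_Icc] at this
      exact this.1
  · rintro ⟨i, j⟩ ⟨⟨hi1, hi2⟩, ⟨hj1, hj2⟩⟩ ⟨i', j'⟩ ⟨⟨hi1', hi2'⟩, ⟨hj1', hj2'⟩⟩ heq
    simp only at heq hi1 hi2 hj1 hj2 hi1' hi2' hj1' hj2' ⊢
    by_cases hj : j ≤ b <;> by_cases hj' : j' ≤ b
    · rw [shuf_eqL hi1 hi2 hj1 hj, shuf_eqL hi1' hi2' hj1' hj'] at heq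
      obtain ⟨g1, g2⟩ := G_range hcard hG hi1 hi2 hj1 hj
      obtain ⟨g1', g2'⟩ := G_range hcard hG hi1' hi2' hj1' hj'
      have : G i j = G i' j' := by
        have := congrArg (rk s) heq
        rwa [rk_nth g1 g2, rk_nth g1' g2'] at this
      exact hG.2.1.injOn (show ((i:ℕ), j) ∈ _ from ⟨⟨hi1, hi2⟩, ⟨hj1, hj⟩⟩)
        (show ((i':ℕ), j') ∈ _ from ⟨⟨hi1', hi2'⟩, ⟨hj1', hj'⟩⟩) this
    · exfalso
      have h1 := shuf_memL (m := m) (H := H) hcard hG hi1 hi2 hj1 hj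
      have h2 := shuf_memR (G := G) hs hcard hbm hH hi1' hi2' (by omega) hj2'
      rw [← heq, Finset.mem_sdiff] at h2
      exact h2.2 h1
    · exfalso
      have h1 := shuf_memL (m := m) (H := H) hcard hG hi1' hi2' hj1' hj'
      have h2 := shuf_memR (G := G) hs hcard hbm hH hi1 hi2 (by omega) hj2
      rw [heq, Finset.mem_sdiff] at h2
      exact h2.2 h1
    · rw [shuf_eqR hi1 hi2 (by omega) hj2, shuf_eqR hi1' hi2' (by omega) hj2'] at heq
      obtain ⟨g1, g2⟩ := H_range hs hcard hbm hH hi1 hi2 (by omega : 1 ≤ j - b) (by omega)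
      obtain ⟨g1', g2'⟩ := H_range hs hcard hbm hH hi1' hi2' (by omega : 1 ≤ j' - b) (by omega)
      have : H i (j - b) = H i' (j' - b) := by
        have := congrArg (rk (Finset.Icc 1 (k * m) \ s)) heq
        rwa [rk_nth g1 g2, rk_nth g1' g2'] at this
      have := hH.2.1.injOn (show ((i:ℕ), j - b) ∈ _ from ⟨⟨hi1, hi2⟩, ⟨by omega, by omega⟩⟩)
        (show ((i':ℕ), j' - b) ∈ _ from ⟨⟨hi1', hi2'⟩, ⟨by omega, by omega⟩⟩) this
      have e1 := congrArg Prod.fst this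
      have e2 := congrArg Prod.snd this
      simp only at e1 e2
      exact Prod.ext e1 (by omega)
  · intro v hv
    rw [Set.mem_Icc] at hv
    by_cases hvs : v ∈ s
    · have hr := rk_mem hvs
      rw [hcard] at hr
      obtain ⟨⟨i, j⟩, hp, hpv⟩ := hG.2.1.surjOn (Set.mem_Icc.mpr hr)
      obtain ⟨⟨hi1, hi2⟩, hj1, hj2⟩ := hp
      refine ⟨(i, j), ⟨⟨hi1, hi2⟩, ⟨hj1, by omega⟩⟩, ?_⟩
      simp only at hpv ⊢
      rw [shuf_eqL hi1 hi2 hj1 hj2, hpv, nth_rk hvs]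
    · have hvs' : v ∈ Finset.Icc 1 (k * m) \ s := by
        rw [Finset.mem_sdiff, Finset.mem_Icc]
        exact ⟨hv, hvs⟩
      have hr := rk_mem hvs'
      rw [scompl_card' hs hcard hbm] at hr
      obtain ⟨⟨i, j⟩, hp, hpv⟩ := hH.2.1.surjOn (Set.mem_Icc.mpr hr)
      obtain ⟨⟨hi1, hi2⟩, hj1, hj2⟩ := hp
      refine ⟨(i, b + j), ⟨⟨hi1, hi2⟩, ⟨by omega, by omega⟩⟩, ?_⟩
      simp only at hpv ⊢
      rw [shuf_eqR hi1 hi2 (by omega) (by omega),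
        show b + j - b = j by omega, hpv, nth_rk hvs']
  · intro i j hi1 hik hj1 hjm
    by_cases hj : j ≤ b
    · rw [shuf_eqL hi1 (by omega) hj1 hj, shuf_eqL (by omega) hik hj1 hj]
      obtain ⟨g1, g2⟩ := G_range hcard hG hi1 (by omega) hj1 hj
      obtain ⟨g1', g2'⟩ := G_range hcard hG (by omega : 1 ≤ i + 1) hik hj1 hj
      rw [nth_lt_nth g1 g2 g1' g2']
      exact hG.2.2 i j hi1 hik hj1 hj
    · rw [shuf_eqR hi1 (by omega) (by omega) hjm, shuf_eqR (by omega) hik (by omega) hjm]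
      obtain ⟨g1, g2⟩ := H_range hs hcard hbm hH hi1 (by omega)
        (by omega : 1 ≤ j - b) (by omega)
      obtain ⟨g1', g2'⟩ := H_range hs hcard hbm hH (by omega : 1 ≤ i + 1) hik
        (by omega : 1 ≤ j - b) (by omega)
      rw [nth_lt_nth g1 g2 g1' g2']
      exact hH.2.2 i (j - b) hi1 hik (by omega) (by omega)

lemma shuf_matchesL (hcard : s.card = k * b) (hG : IsFilling b k G)
    {i : ℕ} (hi1 : 1 ≤ i) (hi2 : i + 1 ≤ b) :
    HM k U (shuf k m b s G H) i ↔ HM k U G i := by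
  apply hm_transfer
  intro a t c t' ha1 ha2 ht1 ht2 hc1 hc2 ht1' ht2'
  rw [shuf_eqL ha1 ha2 (by omega) (by omega), shuf_eqL hc1 hc2 (by omega) (by omega)]
  obtain ⟨g1, g2⟩ := G_range hcard hG ha1 ha2 (by omega : 1 ≤ i - 1 + t) (by omega)
  obtain ⟨g1', g2'⟩ := G_range hcard hG hc1 hc2 (by omega : 1 ≤ i - 1 + t') (by omega)
  exact nth_lt_nth g1 g2 g1' g2'

lemma shuf_matchesR (hs : s ⊆ Finset.Icc 1 (k * m)) (hcard : s.card = k * b) (hbm : b ≤ m)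
    (hH : IsFilling (m - b) k H) {i : ℕ} (hi1 : b + 1 ≤ i) (hi2 : i + 1 ≤ m) :
    HM k U (shuf k m b s G H) i ↔ HM k U H (i - b) := by
  apply hm_transfer
  intro a t c t' ha1 ha2 ht1 ht2 hc1 hc2 ht1' ht2'
  rw [shuf_eqR ha1 ha2 (by omega) (by omega), shuf_eqR hc1 hc2 (by omega) (by omega)]
  rw [show i - 1 + t - b = i - b - 1 + t by omega,
      show i - 1 + t' - b = i - b - 1 + t' by omega]
  obtain ⟨g1, g2⟩ := H_range hs hcard hbm hH ha1 ha2
    (by omega : 1 ≤ i - b - 1 + t) (by omega)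
  obtain ⟨g1', g2'⟩ := H_range hs hcard hbm hH hc1 hc2
    (by omega : 1 ≤ i - b - 1 + t') (by omega)
  exact nth_lt_nth g1 g2 g1' g2'

lemma shuf_Tcond (hs : s ⊆ Finset.Icc 1 (k * m)) (hcard : s.card = k * b) (hbm : b ≤ m)
    (hG : IsFilling b k G) (hH : IsFilling (m - b) k H)
    (hbe : b % 2 = 0) (hGf : FullC k U G b) (hHa : AltC k U H (m - b)) :
    Tcond k m b U (shuf k m b s G H) := by
  intro i h1 h2
  constructor
  · intro hib
    rw [shuf_matchesL hcard hG h1 (by omega)]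
    exact hGf i h1 (by omega)
  · intro hbi
    rw [shuf_matchesR hs hcard hbm hH (by omega) (by omega)]
    rw [hHa (i - b) (by omega) (by omega)]
    rw [Nat.odd_iff, Nat.odd_iff]
    omega

end Bwd

section RoundTrip

variable {k m b : ℕ} {U : Set (ℕ → ℕ → ℕ)}

lemma shuf_std {F : ℕ → ℕ → ℕ} (hF : IsFilling m k F) (hbm : b ≤ m) :
    shuf k m b (fcols k b F) (stdL k b F) (stdR k m b F) = F := by
  funext i j
  by_cases hgrid : 1 ≤ i ∧ i ≤ k ∧ 1 ≤ j ∧ j ≤ m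
  · obtain ⟨hi1, hi2, hj1, hj2⟩ := hgrid
    by_cases hj : j ≤ b
    · rw [shuf_eqL hi1 hi2 hj1 hj, stdL_eq hF hbm hi1 hi2 hj1 hj,
        nth_rk (mem_fcols hF hi1 hi2 hj1 hj)]
    · rw [shuf_eqR hi1 hi2 (by omega) hj2, stdR_eq hF hbm hi1 hi2
        (by omega : 1 ≤ j - b) (by omega)]
      rw [show b + (j - b) = j by omega]
      have hmem : F i j ∈ Finset.Icc 1 (k * m) \ fcols k b F := by
        have := (bijOn_R hF hbm).mapsTo (show ((i : ℕ), j - b) ∈ _ from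
          ⟨⟨hi1, hi2⟩, ⟨by omega, by omega⟩⟩)
        rw [Finset.mem_coe] at this
        rwa [show b + (j - b) = j by omega] at this
      rw [nth_rk hmem]
  · rw [shuf_zero hbm hgrid]
    by_contra h0
    exact hgrid (hF.1 i j fun h => h0 h.symm)

variable {s : Finset ℕ} {G H : ℕ → ℕ → ℕ}
variable (hs : s ⊆ Finset.Icc 1 (k * m)) (hcard : s.card = k * b) (hbm : b ≤ m)
variable (hG : IsFilling b k G) (hH : IsFilling (m - b) k H)

include hs hcard hbm hG hH

lemma fcols_shuf : fcols k b (shuf k m b s G H) = s := by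
  ext v
  rw [fcols, Finset.mem_image]
  constructor
  · rintro ⟨⟨i, j⟩, hp, rfl⟩
    rw [Finset.mem_product, Finset.mem_Icc, Finset.mem_Icc] at hp
    exact shuf_memL (m := m) (H := H) hcard hG hp.1.1 hp.1.2 hp.2.1 hp.2.2
  · intro hv
    have hr := rk_mem hv
    rw [hcard] at hr
    obtain ⟨⟨i, j⟩, hp, hpv⟩ := hG.2.1.surjOn (Set.mem_Icc.mpr hr)
    obtain ⟨⟨hi1, hi2⟩, hj1, hj2⟩ := hp
    refine ⟨(i, j), ?_, ?_⟩
    · rw [Finset.mem_product, Finset.mem_Icc, Finset.mem_Icc]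
      exact ⟨⟨hi1, hi2⟩, hj1, hj2⟩
    · simp only at hpv ⊢
      rw [shuf_eqL hi1 hi2 hj1 hj2, hpv, nth_rk hv]

lemma stdL_shuf : stdL k b (shuf k m b s G H) = G := by
  funext i j
  by_cases hgrid : 1 ≤ i ∧ i ≤ k ∧ 1 ≤ j ∧ j ≤ b
  · obtain ⟨hi1, hi2, hj1, hj2⟩ := hgrid
    have hWF : IsFilling m k (shuf k m b s G H) := shuf_isFilling hs hcard hbm hG hH
    rw [stdL_eq hWF hbm hi1 hi2 hj1 hj2, fcols_shuf hs hcard hbm hG hH,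
      shuf_eqL hi1 hi2 hj1 hj2]
    obtain ⟨g1, g2⟩ := G_range hcard hG hi1 hi2 hj1 hj2
    exact rk_nth g1 g2
  · rw [stdL, if_neg hgrid]
    by_contra h0
    exact hgrid (hG.1 i j fun h => h0 h.symm)

lemma stdR_shuf : stdR k m b (shuf k m b s G H) = H := by
  funext i j
  by_cases hgrid : 1 ≤ i ∧ i ≤ k ∧ 1 ≤ j ∧ j ≤ m - b
  · obtain ⟨hi1, hi2, hj1, hj2⟩ := hgrid
    have hWF : IsFilling m k (shuf k m b s G H) := shuf_isFilling hs hcard hbm hG hH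
    rw [stdR_eq hWF hbm hi1 hi2 hj1 hj2, fcols_shuf hs hcard hbm hG hH,
      shuf_eqR hi1 hi2 (by omega) (by omega), show b + j - b = j by omega]
    obtain ⟨g1, g2⟩ := H_range hs hcard hbm hH hi1 hi2 hj1 hj2
    exact rk_nth g1 g2
  · rw [stdR, if_neg hgrid]
    by_contra h0
    exact hgrid (hH.1 i j fun h => h0 h.symm)

end RoundTrip

section CardT

variable (k m b : ℕ) (U : Set (ℕ → ℕ → ℕ))

noncomputable def eqT (hbe : b % 2 = 0) (hbm : b ≤ m) :
    {F : ℕ → ℕ → ℕ // IsFilling m k F ∧ Tcond k m b U F} ≃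
    ({s : Finset ℕ // s ⊆ Finset.Icc 1 (k * m) ∧ s.card = k * b} ×
      {G : ℕ → ℕ → ℕ // IsFilling b k G ∧ FullC k U G b} ×
      {H : ℕ → ℕ → ℕ // IsFilling (m - b) k H ∧ AltC k U H (m - b)}) where
  toFun := fun ⟨F, hF, hT⟩ =>
    (⟨fcols k b F, fcols_subset hF hbm, fcols_card hF hbm⟩,
     ⟨stdL k b F, stdL_isFilling hF hbm, stdL_FullC hF hbm hT⟩,
     ⟨stdR k m b F, stdR_isFilling hF hbm, stdR_AltC hF hbm hT hbe⟩)
  invFun := fun ⟨⟨s, hs, hcard⟩, ⟨G, hG, hGf⟩, ⟨H, hH, hHa⟩⟩ =>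
    ⟨shuf k m b s G H, shuf_isFilling hs hcard hbm hG hH,
      shuf_Tcond hs hcard hbm hG hH hbe hGf hHa⟩
  left_inv := fun ⟨F, hF, hT⟩ => Subtype.ext (shuf_std hF hbm)
  right_inv := fun ⟨⟨s, hs, hcard⟩, ⟨G, hG, hGf⟩, ⟨H, hH, hHa⟩⟩ => by
    refine Prod.ext (Subtype.ext ?_) (Prod.ext (Subtype.ext ?_) (Subtype.ext ?_))
    · exact fcols_shuf hs hcard hbm hG hH
    · exact stdL_shuf hs hcard hbm hG hH
    · exact stdR_shuf hs hcard hbm hG hH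

lemma card_subsets :
    Nat.card {s : Finset ℕ // s ⊆ Finset.Icc 1 (k * m) ∧ s.card = k * b} =
      (k * m).choose (k * b) := by
  have e : {s : Finset ℕ // s ⊆ Finset.Icc 1 (k * m) ∧ s.card = k * b} ≃
      {s : Finset ℕ // s ∈ Finset.powersetCard (k * b) (Finset.Icc 1 (k * m))} :=
    Equiv.subtypeEquivRight fun s => (Finset.mem_powersetCard).symm
  rw [Nat.card_congr e, Nat.card_eq_finsetCard, Finset.card_powersetCard, Nat.card_Icc]
  simp

lemma fullCount_eq (n : ℕ) :
    fullCount n k U = Nat.card {G : ℕ → ℕ → ℕ // IsFilling n k G ∧ FullC k U G n} := rfl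

lemma altCount_eq (n : ℕ) :
    altCount n k U = Nat.card {H : ℕ → ℕ → ℕ // IsFilling n k H ∧ AltC k U H n} := by
  apply Nat.card_congr
  apply Equiv.subtypeEquivRight
  intro H
  apply and_congr_right
  intro _
  constructor
  · rintro ⟨h1, h2⟩ i hi1 hi2
    constructor
    · intro hm
      by_contra hodd
      have heven : Even i := Nat.even_iff.mpr (by rw [Nat.odd_iff] at hodd; omega)
      exact h2 i heven hi1 hi2 hm
    · intro hodd
      exact h1 i hodd hi2
  · intro h
    constructor
    · intro i hodd hi2
      have hi1 : 1 ≤ i := by rw [Nat.odd_iff] at hodd; omega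
      exact (h i hi1 hi2).mpr hodd
    · intro i heven hi1 hi2 hm
      have := (h i hi1 hi2).mp hm
      rw [Nat.odd_iff] at this
      rw [Nat.even_iff] at heven
      omega

lemma card_Tcond (hbe : b % 2 = 0) (hbm : b ≤ m) :
    Nat.card {F : ℕ → ℕ → ℕ // IsFilling m k F ∧ Tcond k m b U F} =
      (k * m).choose (k * b) * (fullCount b k U * altCount (m - b) k U) := by
  rw [Nat.card_congr (eqT k m b U hbe hbm), Nat.card_prod, Nat.card_prod]
  rw [card_subsets, fullCount_eq, altCount_eq]

end CardT

section Telescope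

variable (k m : ℕ) (U : Set (ℕ → ℕ → ℕ))

lemma finite_T (p : (ℕ → ℕ → ℕ) → Prop) :
    Finite {F : ℕ → ℕ → ℕ // IsFilling m k F ∧ p F} :=
  (finite_fillings m k p).to_subtype

lemma card_iff_pred {p q : (ℕ → ℕ → ℕ) → Prop}
    (h : ∀ F, IsFilling m k F → (p F ↔ q F)) :
    Nat.card {F : ℕ → ℕ → ℕ // IsFilling m k F ∧ p F} =
      Nat.card {F : ℕ → ℕ → ℕ // IsFilling m k F ∧ q F} := by
  apply Nat.card_congr
  apply Equiv.subtypeEquivRight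
  intro F
  constructor
  · rintro ⟨h1, h2⟩; exact ⟨h1, (h F h1).mp h2⟩
  · rintro ⟨h1, h2⟩; exact ⟨h1, (h F h1).mpr h2⟩

lemma T_split {b : ℕ} (hb1 : 2 ≤ b) (hbm : b ≤ m - 1) (hbe : b % 2 = 0) :
    Nat.card {F : ℕ → ℕ → ℕ // IsFilling m k F ∧ Tcond k m b U F} =
      Nat.card {F : ℕ → ℕ → ℕ // IsFilling m k F ∧ Ucond k m b U F} +
      Nat.card {F : ℕ → ℕ → ℕ // IsFilling m k F ∧ Ucond k m (b - 2) U F} := by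
  rw [card_split (fun F => IsFilling m k F ∧ Tcond k m b U F) (fun F => HM k U F b)
    (finite_fillings m k _)]
  congr 1
  · apply Nat.card_congr
    apply Equiv.subtypeEquivRight
    intro F
    constructor
    · rintro ⟨⟨h1, hT⟩, hm⟩
      refine ⟨h1, fun i hi1 hi2 => ⟨fun hib => ?_, fun hbi => (hT i hi1 hi2).2 hbi⟩⟩
      rcases Nat.lt_or_ge i b with h | h
      · exact (hT i hi1 hi2).1 h
      · rwa [show i = b by omega]
    · rintro ⟨h1, hUc⟩
      refine ⟨⟨h1, fun i hi1 hi2 => ⟨fun hib => (hUc i hi1 hi2).1 (by omega),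
        fun hbi => (hUc i hi1 hi2).2 hbi⟩⟩, ?_⟩
      exact (hUc b (by omega) hbm).1 le_rfl
  · apply Nat.card_congr
    apply Equiv.subtypeEquivRight
    intro F
    constructor
    · rintro ⟨⟨h1, hT⟩, hm⟩
      refine ⟨h1, fun i hi1 hi2 => ⟨fun hib => (hT i hi1 hi2).1 (by omega),
        fun hbi => ?_⟩⟩
      rcases Nat.lt_or_ge i b with h | h
      · -- i = b - 1, odd
        have hieq : i = b - 1 := by omega
        have hodd : Odd i := by rw [Nat.odd_iff]; omega
        exact iff_of_true ((hT i hi1 hi2).1 h) hodd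
      · rcases Nat.eq_or_lt_of_le h with h' | h'
        · rw [← h']
          exact iff_of_false hm (by rw [Nat.odd_iff]; omega)
        · exact (hT i hi1 hi2).2 h'
    · rintro ⟨h1, hUc⟩
      have hnotb : ¬ HM k U F b := by
        have := (hUc b (by omega) hbm).2 (by omega)
        rw [this, Nat.odd_iff]
        omega
      refine ⟨⟨h1, fun i hi1 hi2 => ⟨fun hib => ?_, fun hbi => (hUc i hi1 hi2).2 (by omega)⟩⟩,
        hnotb⟩
      rcases Nat.lt_or_ge i (b - 1) with h | h
      · exact (hUc i hi1 hi2).1 (by omega)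
      · have hieq : i = b - 1 := by omega
        have hodd : Odd i := by rw [Nat.odd_iff]; omega
        exact ((hUc i hi1 hi2).2 (by omega)).mpr hodd

lemma U_zero_eq_alt :
    Nat.card {F : ℕ → ℕ → ℕ // IsFilling m k F ∧ Ucond k m 0 U F} = altCount m k U := by
  rw [altCount_eq]
  apply card_iff_pred
  intro F _
  constructor
  · intro h i hi1 hi2
    exact (h i hi1 hi2).2 (by omega)
  · intro h i hi1 hi2
    exact ⟨fun h0 => absurd h0 (by omega), fun _ => h i hi1 hi2⟩

lemma T_zero_eq_U :
    Nat.card {F : ℕ → ℕ → ℕ // IsFilling m k F ∧ Tcond k m 0 U F} =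
      Nat.card {F : ℕ → ℕ → ℕ // IsFilling m k F ∧ Ucond k m 0 U F} := by
  apply card_iff_pred
  intro F _
  constructor
  · intro h i hi1 hi2
    exact ⟨fun h0 => absurd h0 (by omega), fun _ => (h i hi1 hi2).2 (by omega)⟩
  · intro h i hi1 hi2
    exact ⟨fun h0 => absurd h0 (by omega), fun _ => (h i hi1 hi2).2 (by omega)⟩

lemma U_top_eq_full :
    Nat.card {F : ℕ → ℕ → ℕ // IsFilling m k F ∧ Ucond k m (m - 1) U F} =
      fullCount m k U := by
  rw [fullCount_eq]
  apply card_iff_pred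
  intro F _
  constructor
  · intro h i hi1 hi2
    exact (h i hi1 hi2).1 hi2
  · intro h i hi1 hi2
    exact ⟨fun _ => h i hi1 hi2, fun hlt => absurd hi2 (by omega)⟩

lemma telescope : ∀ r : ℕ, 2 * r ≤ m - 1 →
    (∑ j ∈ Finset.range (r + 1), (-1 : ℚ) ^ j *
      (Nat.card {F : ℕ → ℕ → ℕ // IsFilling m k F ∧ Tcond k m (2 * j) U F} : ℚ)) =
    (-1 : ℚ) ^ r *
      (Nat.card {F : ℕ → ℕ → ℕ // IsFilling m k F ∧ Ucond k m (2 * r) U F} : ℚ) := by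
  intro r
  induction r with
  | zero =>
    intro _
    rw [Finset.sum_range_one]
    norm_num
    exact_mod_cast T_zero_eq_U k m U
  | succ r ih =>
    intro hr
    rw [Finset.sum_range_succ, ih (by omega)]
    have hsplit := T_split k m U (b := 2 * (r + 1)) (by omega) (by omega) (by omega)
    rw [show 2 * (r + 1) - 2 = 2 * r by omega] at hsplit
    rw [hsplit]
    push_cast
    ring

lemma key_identity (hm : Odd m) :
    (altCount m k U : ℚ) +
      ∑ i ∈ Finset.range ((m - 1) / 2),
        (-1 : ℚ) ^ (i + 1) * ((k * m).choose (k * (2 * (i + 1)))) *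
          (fullCount (2 * (i + 1)) k U : ℚ) * (altCount (m - 2 * (i + 1)) k U : ℚ) =
    (-1 : ℚ) ^ ((m - 1) / 2) * (fullCount m k U : ℚ) := by
  have hm1 : 1 ≤ m := hm.pos
  set J := (m - 1) / 2 with hJ
  have hmodd : m % 2 = 1 := Nat.odd_iff.mp hm
  have h2J : 2 * J = m - 1 := by omega
  have htel := telescope k m U J (by omega)
  rw [Finset.sum_range_succ'] at htel
  have hT0 : (Nat.card {F : ℕ → ℕ → ℕ // IsFilling m k F ∧ Tcond k m (2 * 0) U F} : ℚ)
      = (altCount m k U : ℚ) := by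
    rw [show 2 * 0 = 0 by norm_num, T_zero_eq_U k m U, U_zero_eq_alt k m U]
  have hUtop : (Nat.card {F : ℕ → ℕ → ℕ // IsFilling m k F ∧ Ucond k m (2 * J) U F} : ℚ)
      = (fullCount m k U : ℚ) := by
    rw [h2J, U_top_eq_full k m U]
  rw [hT0, hUtop] at htel
  simp only [pow_zero, one_mul] at htel
  rw [← htel]
  rw [add_comm]
  congr 1
  apply Finset.sum_congr rfl
  intro i hi
  rw [Finset.mem_range] at hi
  have hcard := card_Tcond k m (2 * (i + 1)) U (by omega) (by omega)
  rw [hcard]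
  push_cast
  ring

end Telescope

end Stmt11

open Stmt11

/-- Theorem: `(Σ_{n≥1} Alt_{2n-1}^Υ t^{2n-1}/(k(2n-1))!) ·
(1 + Σ_{n≥1} (-1)^n t^{2n} full_{2n}^Υ/(2kn)!)
  = Σ_{n≥1} (-1)^{n-1} t^{2n-1} full_{2n-1}^Υ/(k(2n-1))!` as formal power series in `t`
over `ℚ` (odd coefficients are indexed by `m = 2n - 1`, even ones by `m = 2n`). -/
theorem stmt11 (k : ℕ) (hk : 1 ≤ k) (U : Set (ℕ → ℕ → ℕ))
    (hU : ∀ P ∈ U, IsFilling 2 k P) :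
    (PowerSeries.mk fun m => if m % 2 = 1 then
        (altCount m k U : ℚ) / ((k * m).factorial : ℚ) else 0) *
    (PowerSeries.mk fun m => if m = 0 then (1 : ℚ) else
        if m % 2 = 0 then
          (-1) ^ (m / 2) * (fullCount m k U : ℚ) / ((k * m).factorial : ℚ)
        else 0) =
    PowerSeries.mk (fun m => if m % 2 = 1 then
        (-1) ^ ((m - 1) / 2) * (fullCount m k U : ℚ) / ((k * m).factorial : ℚ)
      else 0) := by
    classical
  ext m
  rw [PowerSeries.coeff_mul]
  simp only [PowerSeries.coeff_mk]
  rw [Finset.Nat.sum_antidiagonal_eq_sum_range_succ_mk]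
  simp only []
  by_cases hm : m % 2 = 1
  case neg =>
    rw [if_neg hm]
    apply Finset.sum_eq_zero
    intro i hi
    rw [Finset.mem_range] at hi
    by_cases hio : i % 2 = 1
    · have h1 : ¬ (m - i = 0) := by omega
      have h2 : ¬ ((m - i) % 2 = 0) := by omega
      rw [if_neg h1, if_neg h2, mul_zero]
    · rw [if_neg hio, zero_mul]
  case pos =>
    rw [if_pos hm]
    have hm1 : 1 ≤ m := by omega
    set J := (m - 1) / 2 with hJdef
    have hfac : ∀ n : ℕ, ((n.factorial : ℚ) ≠ 0) :=
      fun n => Nat.cast_ne_zero.mpr (Nat.factorial_ne_zero n)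
    -- restrict the sum to odd indices
    rw [← Finset.sum_filter_of_ne (p := fun i => i % 2 = 1)
      (by
        intro x hx hne
        by_contra hxo
        rw [if_neg hxo, zero_mul] at hne
        exact hne rfl)]
    -- reindex by j with i = m - 2 j
    rw [Finset.sum_nbij' (i := fun a => (m - a) / 2) (j := fun a => m - 2 * a)
      (t := Finset.range (J + 1))
      (g := fun j => (if (m - 2 * j) % 2 = 1 then
          (altCount (m - 2 * j) k U : ℚ) / ((k * (m - 2 * j)).factorial : ℚ) else 0) *
        (if m - (m - 2 * j) = 0 then (1 : ℚ) else
          if (m - (m - 2 * j)) % 2 = 0 then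
            (-1) ^ ((m - (m - 2 * j)) / 2) * (fullCount (m - (m - 2 * j)) k U : ℚ) /
              ((k * (m - (m - 2 * j))).factorial : ℚ)
          else 0))
      (by
        intro a ha
        try dsimp only
        rw [Finset.mem_filter, Finset.mem_range] at ha
        rw [Finset.mem_range]
        omega)
      (by
        intro a ha
        try dsimp only
        rw [Finset.mem_range] at ha
        rw [Finset.mem_filter, Finset.mem_range]
        omega)
      (by
        intro a ha
        try dsimp only
        rw [Finset.mem_filter, Finset.mem_range] at ha
        omega)
      (by
        intro a ha
        try dsimp only
        rw [Finset.mem_range] at ha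
        omega)
      (by
        intro a ha
        try dsimp only
        rw [Finset.mem_filter, Finset.mem_range] at ha
        have e1 : m - 2 * ((m - a) / 2) = a := by omega
        rw [e1])]
    -- evaluate the terms
    rw [Finset.sum_congr rfl (g := fun j => (if j = 0 then
        (altCount m k U : ℚ) / ((k * m).factorial : ℚ) else
        ((-1 : ℚ) ^ j * ((k * m).choose (k * (2 * j)) : ℚ) * (fullCount (2 * j) k U : ℚ) *
          (altCount (m - 2 * j) k U : ℚ)) / ((k * m).factorial : ℚ)))
      (by
        intro j hj
        try dsimp only
        rw [Finset.mem_range] at hj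
        have hodd : (m - 2 * j) % 2 = 1 := by omega
        rw [if_pos hodd]
        by_cases hj0 : j = 0
        · subst hj0
          rw [if_pos rfl]
          have e0 : m - (m - 2 * 0) = 0 := by omega
          rw [if_pos e0, mul_one]
          rw [show m - 2 * 0 = m by omega]
        · rw [if_neg hj0]
          have e2 : m - (m - 2 * j) = 2 * j := by omega
          rw [e2, if_neg (by omega : ¬ (2 * j = 0)), if_pos (by omega : (2 * j) % 2 = 0)]
          rw [show 2 * j / 2 = j by omega]
          have hle : k * (2 * j) ≤ k * m := Nat.mul_le_mul_left k (by omega)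
          rw [Nat.cast_choose ℚ hle]
          have e3 : k * m - k * (2 * j) = k * (m - 2 * j) := by
            rw [Nat.mul_sub]
          rw [e3]
          field_simp
          try ring)]
    rw [Finset.sum_range_succ']
    simp only [if_pos rfl]
    have hsum : (∑ j ∈ Finset.range J, (if j + 1 = 0 then
        (altCount m k U : ℚ) / ((k * m).factorial : ℚ) else
        ((-1 : ℚ) ^ (j + 1) * ((k * m).choose (k * (2 * (j + 1))) : ℚ) *
          (fullCount (2 * (j + 1)) k U : ℚ) *
          (altCount (m - 2 * (j + 1)) k U : ℚ)) / ((k * m).factorial : ℚ))) =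
        (∑ j ∈ Finset.range J, ((-1 : ℚ) ^ (j + 1) *
          ((k * m).choose (k * (2 * (j + 1))) : ℚ) * (fullCount (2 * (j + 1)) k U : ℚ) *
          (altCount (m - 2 * (j + 1)) k U : ℚ))) / ((k * m).factorial : ℚ) := by
      rw [Finset.sum_div]
      apply Finset.sum_congr rfl
      intro j _
      rw [if_neg (by omega : ¬ (j + 1 = 0))]
    have hkey := key_identity k m U (Nat.odd_iff.mpr hm)
    rw [← hJdef] at hkey
    rw [hsum, if_true, ← add_div, add_comm _ ((altCount m k U : ℚ)), hkey,
      mul_div_assoc]
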